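/- Suppose $P_n$ satisfies the lowering relation $(\frac{d}{dz}+B_n(z))P_n(z)=\beta_n A_n(z)P_{n-1}(z)$, the raising relation $(\frac{d}{dz}-B_n(z)-\mathrm{v}_0'(z))P_{n-1}(z)=-A_{n-1}(z)P_n(z)$, and the sum rule $(S_2')$: $B_n^2+\mathrm{v}_0'B_n+\sum_{j=0}^{n-1}A_j=\beta_n A_n A_{n-1}$. Then on the set where $A_n(z)\neq 0$, $P_n$ satisfies the second-order ODE $P_n''(z)-\big(\mathrm{v}_0'(z)+\frac{A_n'(z)}{A_n(z)}\big)P_n'(z)+\big(B_n'(z)-B_n(z)\frac{A_n'(z)}{A_n(z)}+\sum_{j=0}^{n-1}A_j(z)\big)P_n(z)=0$. -/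
import Mathlib


/-- Second-order ODE for the orthogonal polynomials, from the ladder relations and `(S₂')`. -/
theorem stmt_4 (Pn Pn' Pn'' Pnm1 An An' Anm1 Bn Bn' v0' sumA : ℝ → ℝ) (βn : ℝ)
    (hPn : ∀ z, HasDerivAt Pn (Pn' z) z)
    (hPn' : ∀ z, HasDerivAt Pn' (Pn'' z) z)
    (hAn : ∀ z, HasDerivAt An (An' z) z)
    (hBn : ∀ z, HasDerivAt Bn (Bn' z) z)
    (hlow : ∀ z, Pn' z + Bn z * Pn z = βn * An z * Pnm1 z)
    (hraise : ∀ z, HasDerivAt Pnm1 ((Bn z + v0' z) * Pnm1 z - Anm1 z * Pn z) z)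
    (hS2' : ∀ z, (Bn z) ^ 2 + v0' z * Bn z + sumA z = βn * An z * Anm1 z) :
    ∀ z, An z ≠ 0 →
      Pn'' z - (v0' z + An' z / An z) * Pn' z
        + (Bn' z - Bn z * (An' z / An z) + sumA z) * Pn z = 0 := by
  intro z hAnz
  have h1 : HasDerivAt (fun z => Pn' z + Bn z * Pn z)
      (Pn'' z + (Bn' z * Pn z + Bn z * Pn' z)) z :=
    (hPn' z).add ((hBn z).mul (hPn z))
  have h2 : HasDerivAt (fun z => βn * An z * Pnm1 z)
      ((βn * An' z) * Pnm1 z + βn * An z * ((Bn z + v0' z) * Pnm1 z - Anm1 z * Pn z)) z :=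
    (((hAn z).const_mul βn).mul (hraise z))
  have hfe : (fun z => Pn' z + Bn z * Pn z) = (fun z => βn * An z * Pnm1 z) :=
    funext hlow
  rw [hfe] at h1
  have E := h1.unique h2
  have hl := hlow z
  have hs := hS2' z
  field_simp
  linear_combination An z * E - An' z * hl - An z * (Bn z + v0' z) * hl + An z * Pn z * hs
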